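/- For every z ∈ ℝ^p, the normal map value F^nor(z) is a (ρ + L)-weak subgradient of ψ at x := prox_{γφ}(z); that is, for every y ∈ ℝ^p, ψ(y) ≥ ψ(x) + ⟪F^nor(z), y − x⟫ − ((ρ + L)/2)‖y − x‖². (This is the precise sense in which F^nor(z) ∈ ∂ψ(prox_{γφ}(z)).) -/

import Mathlib

open scoped RealInnerProductSpace

section Aux

variable {E : Type*} [NormedAddCommGroup E] [InnerProductSpace ℝ E] [CompleteSpace E]

/-- Descent-lemma lower bound: if `f` has `L`-Lipschitz gradient then
`f y ≥ f x + ⟪f' x, y - x⟫ - L/2 ‖y - x‖²`. -/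
lemma descent_lower {L : ℝ} (hL : 0 ≤ L) (f : E → ℝ) (f' : E → E)
    (hf : ∀ x, HasGradientAt f (f' x) x)
    (hlip : ∀ x y, ‖f' x - f' y‖ ≤ L * ‖x - y‖) (x y : E) :
    f x + ⟪f' x, y - x⟫ - L / 2 * ‖y - x‖ ^ 2 ≤ f y := by
  set v := y - x with hv
  set G : ℝ → ℝ := fun t => f (x + t • v) - t * ⟪f' x, v⟫ + L * ‖v‖ ^ 2 / 2 * t ^ 2 with hG
  have hline : ∀ t : ℝ, HasDerivAt (fun s : ℝ => x + s • v) v t := by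
    intro t
    simpa using (((hasDerivAt_id t).smul_const v).const_add x)
  have hGd : ∀ t : ℝ, HasDerivAt G
      (⟪f' (x + t • v), v⟫ - ⟪f' x, v⟫ + L * ‖v‖ ^ 2 / 2 * (2 * t)) t := by
    intro t
    have h1 : HasDerivAt (fun s : ℝ => f (x + s • v)) ⟪f' (x + t • v), v⟫ t := by
      have := ((hf (x + t • v)).hasFDerivAt).comp_hasDerivAt t (hline t)
      simpa [InnerProductSpace.toDual_apply_apply, Function.comp_def] using this
    have h2 : HasDerivAt (fun s : ℝ => s * ⟪f' x, v⟫) ⟪f' x, v⟫ t := by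
      simpa using (hasDerivAt_id t).mul_const (⟪f' x, v⟫)
    have h3 : HasDerivAt (fun s : ℝ => L * ‖v‖ ^ 2 / 2 * s ^ 2)
        (L * ‖v‖ ^ 2 / 2 * (2 * t)) t := by
      simpa [mul_comm] using (hasDerivAt_pow 2 t).const_mul (L * ‖v‖ ^ 2 / 2)
    exact (h1.sub h2).add h3
  have hmono : MonotoneOn G (Set.Icc (0 : ℝ) 1) := by
    refine monotoneOn_of_deriv_nonneg (convex_Icc 0 1)
      (fun t _ => ((hGd t).continuousAt).continuousWithinAt)
      (fun t _ => ((hGd t).differentiableAt).differentiableWithinAt) ?_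
    intro t ht
    rw [interior_Icc] at ht
    rw [(hGd t).deriv]
    have hip : -(‖f' (x + t • v) - f' x‖ * ‖v‖) ≤ ⟪f' (x + t • v) - f' x, v⟫ :=
      neg_le_of_abs_le (abs_real_inner_le_norm _ _)
    have hnn : ‖f' (x + t • v) - f' x‖ ≤ L * (t * ‖v‖) := by
      have := hlip (x + t • v) x
      simpa [norm_smul, abs_of_nonneg ht.1.le, mul_assoc] using this
    have hin : ⟪f' (x + t • v) - f' x, v⟫ ≥ -(L * (t * ‖v‖) * ‖v‖) := by
      have := mul_le_mul_of_nonneg_right hnn (norm_nonneg v)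
      nlinarith [hip]
    have hsub : ⟪f' (x + t • v) - f' x, v⟫ = ⟪f' (x + t • v), v⟫ - ⟪f' x, v⟫ :=
      inner_sub_left _ _ _
    nlinarith [hin, sq_nonneg ‖v‖]
  have h01 := hmono (Set.mem_Icc.2 ⟨le_refl 0, zero_le_one⟩)
    (Set.mem_Icc.2 ⟨zero_le_one, le_refl 1⟩) zero_le_one
  have hG0 : G 0 = f x := by simp [hG]
  have hG1 : G 1 = f y - ⟪f' x, v⟫ + L * ‖v‖ ^ 2 / 2 := by
    simp [hG, hv]
  rw [hG0, hG1] at h01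
  linarith

end Aux

/-- For every `z`, the normal map value `F^nor(z)` is a `(ρ + L)`-weak subgradient of
`ψ = f + φ` at `x = prox_{γφ}(z)`. -/
theorem normal_map_weak_subgradient
    {p : ℕ} (hp : 1 ≤ p) (ρ γ L : ℝ) (hρ : 0 ≤ ρ) (hγ : 0 < γ) (hγρ : γ * ρ < 1)
    (hL : 0 ≤ L)
    (φ : EuclideanSpace ℝ (Fin p) → ℝ)
    (hφlsc : LowerSemicontinuous φ)
    (hφwc : ConvexOn ℝ Set.univ (fun y => φ y + ρ / 2 * ‖y‖ ^ 2))
    (prox : EuclideanSpace ℝ (Fin p) → EuclideanSpace ℝ (Fin p))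
    (hprox : ∀ z, IsMinOn (fun y => φ y + ‖y - z‖ ^ 2 / (2 * γ)) Set.univ (prox z))
    (hproxUnique : ∀ z u,
      IsMinOn (fun y => φ y + ‖y - z‖ ^ 2 / (2 * γ)) Set.univ u → u = prox z)
    (f : EuclideanSpace ℝ (Fin p) → ℝ)
    (f' : EuclideanSpace ℝ (Fin p) → EuclideanSpace ℝ (Fin p))
    (hf : ∀ x, HasGradientAt f (f' x) x)
    (hlip : ∀ x y, ‖f' x - f' y‖ ≤ L * ‖x - y‖)
    (ψ : EuclideanSpace ℝ (Fin p) → ℝ) (hψ : ∀ x, ψ x = f x + φ x)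
    (Fnor : EuclideanSpace ℝ (Fin p) → EuclideanSpace ℝ (Fin p))
    (hFnor : ∀ z, Fnor z = f' (prox z) + γ⁻¹ • (z - prox z)) :
    ∀ z y : EuclideanSpace ℝ (Fin p),
      ψ y ≥ ψ (prox z) + ⟪Fnor z, y - prox z⟫ - (ρ + L) / 2 * ‖y - prox z‖ ^ 2 := by
  intro z y
  set x := prox z with hx
  set n2 : ℝ := ‖y - x‖ ^ 2 with hn2
  set ip : ℝ := ⟪x - z, y - x⟫ with hip
  set D : ℝ := 2 * γ * φ y + γ * ρ * n2 + 2 * ip with hD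
  set E : ℝ := (1 - γ * ρ) * n2 with hE
  have hn2nn : 0 ≤ n2 := by rw [hn2]; positivity
  have hEnn : 0 ≤ E := by
    rw [hE]; exact mul_nonneg (by linarith) hn2nn
  have hkey : ∀ t : ℝ, 0 < t → t ≤ 1 → 2 * γ * φ x ≤ D + t * E := by
    intro t ht ht1
    set yt := x + t • (y - x) with hyt
    have h1 := isMinOn_iff.mp (hprox z) yt (Set.mem_univ _)
    have hcomb : yt = (1 - t) • x + t • y := by
      rw [hyt]; module
    have hcx := hφwc.2 (Set.mem_univ x) (Set.mem_univ y)
      (by linarith : (0:ℝ) ≤ 1 - t) ht.le (by ring)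
    simp only [smul_eq_mul, ← hcomb] at hcx
    -- norm identities
    have e1 : ‖yt‖ ^ 2 = (1 - t) ^ 2 * ‖x‖ ^ 2 + 2 * ((1 - t) * t) * ⟪x, y⟫ + t ^ 2 * ‖y‖ ^ 2 := by
      rw [hcomb, norm_add_sq_real, real_inner_smul_left, real_inner_smul_right,
        norm_smul, norm_smul, Real.norm_eq_abs, Real.norm_eq_abs, mul_pow, mul_pow,
        sq_abs, sq_abs]
      ring
    have e2 : ‖y - x‖ ^ 2 = ‖y‖ ^ 2 - 2 * ⟪x, y⟫ + ‖x‖ ^ 2 := by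
      rw [norm_sub_sq_real, real_inner_comm]
    have e3 : ‖yt - z‖ ^ 2 = ‖x - z‖ ^ 2 + 2 * t * ip + t ^ 2 * n2 := by
      have hsub : yt - z = (x - z) + t • (y - x) := by rw [hyt]; abel
      rw [hn2, hip, hsub, norm_add_sq_real, real_inner_smul_right, norm_smul,
        Real.norm_eq_abs, mul_pow, sq_abs]
      ring
    have hid : (1 - t) * ‖x‖ ^ 2 + t * ‖y‖ ^ 2 - ‖yt‖ ^ 2 = t * (1 - t) * n2 := by
      rw [hn2, e1, e2]; ring
    have hid2 : ρ / 2 * ((1 - t) * ‖x‖ ^ 2 + t * ‖y‖ ^ 2 - ‖yt‖ ^ 2)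
        = ρ / 2 * (t * (1 - t) * n2) := by rw [hid]
    have hP : φ yt ≤ (1 - t) * φ x + t * φ y + ρ / 2 * (t * (1 - t) * n2) := by
      linarith [hcx, hid2]
    have h1' : 2 * γ * φ x + ‖x - z‖ ^ 2 ≤ 2 * γ * φ yt + ‖yt - z‖ ^ 2 := by
      have h2γ : (0:ℝ) < 2 * γ := by linarith
      have hmul := mul_le_mul_of_nonneg_left h1 h2γ.le
      have hne : γ ≠ 0 := ne_of_gt hγ
      field_simp at hmul
      linarith [hmul]
    have h1'' : 2 * γ * φ x ≤ 2 * γ * φ yt + 2 * t * ip + t ^ 2 * n2 := by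
      linarith [h1', e3]
    have hP2 := mul_le_mul_of_nonneg_left hP (by positivity : (0:ℝ) ≤ 2 * γ)
    have hgoal_t : t * (2 * γ * φ x) ≤ t * (D + t * E) := by
      rw [hD, hE]
      linarith [h1'', hP2]
    exact le_of_mul_le_mul_left hgoal_t ht
  have hAD : 2 * γ * φ x ≤ D := by
    refine le_of_forall_pos_le_add fun ε hε => ?_
    set t : ℝ := min 1 (ε / (E + 1)) with htdef
    have ht0 : 0 < t := lt_min one_pos (div_pos hε (by linarith))
    have htE : t * E ≤ ε := by
      have h1 : t ≤ ε / (E + 1) := min_le_right _ _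
      have h2 : t * E ≤ (ε / (E + 1)) * E := mul_le_mul_of_nonneg_right h1 hEnn
      have h3 : (ε / (E + 1)) * E ≤ (ε / (E + 1)) * (E + 1) := by
        apply mul_le_mul_of_nonneg_left (by linarith)
        positivity
      have h4 : (ε / (E + 1)) * (E + 1) = ε := by field_simp
      linarith
    have := hkey t ht0 (min_le_left _ _)
    linarith
  -- divide by 2γ
  have hφineq : φ x ≤ φ y + ρ / 2 * n2 + γ⁻¹ * ip := by
    have hne : γ ≠ 0 := ne_of_gt hγ
    have h2 := mul_le_mul_of_nonneg_left hAD
      (by positivity : (0:ℝ) ≤ (2 * γ)⁻¹)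
    have eL : (2 * γ)⁻¹ * (2 * γ * φ x) = φ x := by field_simp
    have eR : (2 * γ)⁻¹ * D = φ y + ρ / 2 * n2 + γ⁻¹ * ip := by
      rw [hD]; field_simp
    rw [eL, eR] at h2
    exact h2
  -- f part
  have hfB := descent_lower hL f f' hf hlip x y
  -- assemble
  have hinn : ⟪Fnor z, y - x⟫ = ⟪f' x, y - x⟫ - γ⁻¹ * ip := by
    rw [hFnor z, inner_add_left, real_inner_smul_left, ← hx]
    have hneg : (z - x) = -(x - z) := by abel
    rw [hneg, inner_neg_left, hip]
    ring
  rw [hψ y, hψ x, hinn]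
  rw [← hn2] at hfB
  linarith [hφineq, hfB]
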